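/- The derivative of the pointwise distortion δ(s) := Σ_{l∈ℤ} ∫_{l-s-1/2}^{l-s+1/2} (n - l)² φ_σ(n) dn with respect to s equals 2s Σ_{l∈ℤ} φ_σ(l - s + 1/2). In particular, sign(δ'(s)) = sign(s). -/

import Mathlib

open MeasureTheory intervalIntegral

/-- Density `φ_σ` of `N(0, σ²)`. -/
noncomputable def gpdf (σ x : ℝ) : ℝ :=
  (Real.sqrt (2 * Real.pi) * σ)⁻¹ * Real.exp (-(x ^ 2) / (2 * σ ^ 2))

/-- Standard normal pdf `ψ`. -/
noncomputable def stdpdf (x : ℝ) : ℝ := (Real.sqrt (2 * Real.pi))⁻¹ * Real.exp (-(x ^ 2) / 2)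

/-- Standard normal cdf `Φ`. -/
noncomputable def stdcdf (x : ℝ) : ℝ := ∫ t in Set.Iic x, stdpdf t

lemma gpdf_pos {σ : ℝ} (hσ : 0 < σ) (x : ℝ) : 0 < gpdf σ x := by
  have h1 : 0 < Real.sqrt (2 * Real.pi) := Real.sqrt_pos.mpr (by positivity)
  unfold gpdf
  positivity

lemma gpdf_continuous (σ : ℝ) : Continuous (gpdf σ) := by
  unfold gpdf
  fun_prop

lemma summable_exp_neg_abs_int : Summable (fun l : ℤ => Real.exp (-|(l : ℝ)|)) := by
  apply Summable.of_nat_of_neg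
  · refine Real.summable_exp_neg_nat.congr fun n => ?_
    simp [abs_of_nonneg]
  · refine Real.summable_exp_neg_nat.congr fun n => ?_
    push_cast
    simp [abs_of_nonneg]

lemma gpdf_le {σ B : ℝ} (hσ : 0 < σ) (l : ℤ) {w : ℝ} (hw : |w| ≤ B) :
    gpdf σ ((l : ℝ) - w) ≤ (Real.sqrt (2 * Real.pi) * σ)⁻¹ *
      Real.exp ((2 * σ ^ 2 * σ ^ 2 + B ^ 2) / (2 * σ ^ 2)) * Real.exp (-|(l : ℝ)|) := by
  have h1 : 0 < Real.sqrt (2 * Real.pi) := Real.sqrt_pos.mpr (by positivity)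
  have hK : (0:ℝ) ≤ (Real.sqrt (2 * Real.pi) * σ)⁻¹ := by positivity
  have h2σ : (0:ℝ) < 2 * σ ^ 2 := by positivity
  unfold gpdf
  rw [mul_assoc, ← Real.exp_add]
  refine mul_le_mul_of_nonneg_left ?_ hK
  rw [Real.exp_le_exp]
  have hw2 : w ^ 2 ≤ B ^ 2 := sq_le_sq' (by linarith [abs_le.mp hw]) (abs_le.mp hw).2
  have key : -(((l:ℝ) - w) ^ 2) ≤ (2 * σ ^ 2 * σ ^ 2 + B ^ 2) + -|(l:ℝ)| * (2 * σ ^ 2) := by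
    nlinarith [sq_nonneg ((l:ℝ) - 2 * w), sq_nonneg (|(l:ℝ)| - 2 * σ ^ 2), sq_abs ((l:ℝ))]
  have heq : ((2 * σ ^ 2 * σ ^ 2 + B ^ 2) + -|(l:ℝ)| * (2 * σ ^ 2)) / (2 * σ ^ 2)
      = (2 * σ ^ 2 * σ ^ 2 + B ^ 2) / (2 * σ ^ 2) + -|(l:ℝ)| := by
    field_simp
  calc -(((l:ℝ) - w) ^ 2) / (2 * σ ^ 2)
      ≤ ((2 * σ ^ 2 * σ ^ 2 + B ^ 2) + -|(l:ℝ)| * (2 * σ ^ 2)) / (2 * σ ^ 2) :=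
        div_le_div_of_nonneg_right key h2σ.le
    _ = _ := heq

/-- Derivative of a single term of the distortion series. -/
noncomputable def Dterm (σ : ℝ) (l : ℤ) (t : ℝ) : ℝ :=
  (t + 1 / 2) ^ 2 * gpdf σ ((l : ℝ) - t - 1 / 2) -
    (1 / 2 - t) ^ 2 * gpdf σ ((l : ℝ) - t + 1 / 2)

lemma term_hasDerivAt (σ : ℝ) (l : ℤ) (t : ℝ) :
    HasDerivAt
      (fun t : ℝ => ∫ n in ((l : ℝ) - t - 1 / 2)..((l : ℝ) - t + 1 / 2),
        (n - (l : ℝ)) ^ 2 * gpdf σ n)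
      (Dterm σ l t) t := by
  have hg : Continuous (fun n : ℝ => (n - (l : ℝ)) ^ 2 * gpdf σ n) :=
    ((continuous_id.sub continuous_const).pow 2).mul (gpdf_continuous σ)
  have hI : ∀ a b : ℝ,
      IntervalIntegrable (fun n : ℝ => (n - (l : ℝ)) ^ 2 * gpdf σ n) volume a b :=
    fun a b => hg.intervalIntegrable a b
  have hF : ∀ x : ℝ,
      HasDerivAt (fun x : ℝ => ∫ n in (0:ℝ)..x, (n - (l : ℝ)) ^ 2 * gpdf σ n)
        ((x - (l : ℝ)) ^ 2 * gpdf σ x) x := fun x =>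
    integral_hasDerivAt_right (hI 0 x) (hg.stronglyMeasurableAtFilter _ _) hg.continuousAt
  have hb : HasDerivAt (fun t : ℝ => (l : ℝ) - t + 1 / 2) (-1) t := by
    simpa using ((hasDerivAt_id t).const_sub ((l : ℝ))).add_const (1 / 2 : ℝ)
  have ha : HasDerivAt (fun t : ℝ => (l : ℝ) - t - 1 / 2) (-1) t := by
    simpa using ((hasDerivAt_id t).const_sub ((l : ℝ))).sub_const (1 / 2 : ℝ)
  have h1' := (hF ((l : ℝ) - t + 1 / 2)).comp t hb
  have h2' := (hF ((l : ℝ) - t - 1 / 2)).comp t ha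
  have h3 := h1'.sub h2'
  have h4 :
      HasDerivAt
        (fun t : ℝ => ∫ n in ((l : ℝ) - t - 1 / 2)..((l : ℝ) - t + 1 / 2),
          (n - (l : ℝ)) ^ 2 * gpdf σ n)
        ((((l : ℝ) - t + 1 / 2) - (l : ℝ)) ^ 2 * gpdf σ ((l : ℝ) - t + 1 / 2) * (-1) -
          (((l : ℝ) - t - 1 / 2) - (l : ℝ)) ^ 2 * gpdf σ ((l : ℝ) - t - 1 / 2) * (-1)) t := by
    refine h3.congr_of_eventuallyEq (Filter.Eventually.of_forall fun t' => ?_)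
    exact (integral_interval_sub_left (hI 0 _) (hI 0 _)).symm
  convert h4 using 1
  unfold Dterm
  ring

lemma Dterm_bound {σ s : ℝ} (hσ : 0 < σ) (l : ℤ) {y : ℝ} (hy : |y| ≤ |s| + 1) :
    ‖Dterm σ l y‖ ≤ 2 * (|s| + 2) ^ 2 * ((Real.sqrt (2 * Real.pi) * σ)⁻¹ *
      Real.exp ((2 * σ ^ 2 * σ ^ 2 + (|s| + 2) ^ 2) / (2 * σ ^ 2)) * Real.exp (-|(l : ℝ)|)) := by
  have hy' := abs_le.mp hy
  have hC : (0:ℝ) ≤ (Real.sqrt (2 * Real.pi) * σ)⁻¹ *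
      Real.exp ((2 * σ ^ 2 * σ ^ 2 + (|s| + 2) ^ 2) / (2 * σ ^ 2)) * Real.exp (-|(l : ℝ)|) := by
    have h1 : 0 < Real.sqrt (2 * Real.pi) := Real.sqrt_pos.mpr (by positivity)
    positivity
  have hg1 : gpdf σ ((l : ℝ) - y - 1 / 2) ≤ (Real.sqrt (2 * Real.pi) * σ)⁻¹ *
      Real.exp ((2 * σ ^ 2 * σ ^ 2 + (|s| + 2) ^ 2) / (2 * σ ^ 2)) * Real.exp (-|(l : ℝ)|) := by
    have he : (l : ℝ) - y - 1 / 2 = (l : ℝ) - (y + 1 / 2) := by ring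
    rw [he]
    exact gpdf_le hσ l (abs_le.mpr ⟨by linarith, by linarith⟩)
  have hg2 : gpdf σ ((l : ℝ) - y + 1 / 2) ≤ (Real.sqrt (2 * Real.pi) * σ)⁻¹ *
      Real.exp ((2 * σ ^ 2 * σ ^ 2 + (|s| + 2) ^ 2) / (2 * σ ^ 2)) * Real.exp (-|(l : ℝ)|) := by
    have he : (l : ℝ) - y + 1 / 2 = (l : ℝ) - (y - 1 / 2) := by ring
    rw [he]
    exact gpdf_le hσ l (abs_le.mpr ⟨by linarith, by linarith⟩)
  have hsq1 : (y + 1 / 2) ^ 2 ≤ (|s| + 2) ^ 2 :=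
    sq_le_sq' (by linarith) (by linarith)
  have hsq2 : (1 / 2 - y) ^ 2 ≤ (|s| + 2) ^ 2 :=
    sq_le_sq' (by linarith) (by linarith)
  have t1 : ‖(y + 1 / 2) ^ 2 * gpdf σ ((l : ℝ) - y - 1 / 2)‖ ≤
      (|s| + 2) ^ 2 * ((Real.sqrt (2 * Real.pi) * σ)⁻¹ *
        Real.exp ((2 * σ ^ 2 * σ ^ 2 + (|s| + 2) ^ 2) / (2 * σ ^ 2)) * Real.exp (-|(l : ℝ)|)) := by
    rw [Real.norm_eq_abs, abs_of_nonneg (mul_nonneg (sq_nonneg _) (gpdf_pos hσ _).le)]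
    exact mul_le_mul hsq1 hg1 (gpdf_pos hσ _).le (by positivity)
  have t2 : ‖(1 / 2 - y) ^ 2 * gpdf σ ((l : ℝ) - y + 1 / 2)‖ ≤
      (|s| + 2) ^ 2 * ((Real.sqrt (2 * Real.pi) * σ)⁻¹ *
        Real.exp ((2 * σ ^ 2 * σ ^ 2 + (|s| + 2) ^ 2) / (2 * σ ^ 2)) * Real.exp (-|(l : ℝ)|)) := by
    rw [Real.norm_eq_abs, abs_of_nonneg (mul_nonneg (sq_nonneg _) (gpdf_pos hσ _).le)]
    exact mul_le_mul hsq2 hg2 (gpdf_pos hσ _).le (by positivity)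
  calc ‖Dterm σ l y‖ ≤ _ + _ := norm_sub_le _ _
    _ ≤ _ := by linarith [t1, t2]

/-- The derivative of the pointwise distortion
`δ(s) = Σ_{l∈ℤ} ∫_{l-s-1/2}^{l-s+1/2} (n-l)² φ_σ(n) dn` with respect to `s` equals
`2s Σ_{l∈ℤ} φ_σ(l - s + 1/2)`; in particular `sign(δ'(s)) = sign(s)`. -/
theorem distortion_derivative (σ s : ℝ) (hσ : 0 < σ) :
    HasDerivAt
      (fun t : ℝ =>
        ∑' l : ℤ, ∫ n in (l - t - 1 / 2 : ℝ)..(l - t + 1 / 2 : ℝ), (n - l) ^ 2 * gpdf σ n)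
      (2 * s * ∑' l : ℤ, gpdf σ ((l : ℝ) - s + 1 / 2)) s ∧
    Real.sign
      (deriv
        (fun t : ℝ =>
          ∑' l : ℤ, ∫ n in (l - t - 1 / 2 : ℝ)..(l - t + 1 / 2 : ℝ), (n - l) ^ 2 * gpdf σ n)
        s) = Real.sign s := by
  have hπ : 0 < Real.sqrt (2 * Real.pi) := Real.sqrt_pos.mpr (by positivity)
  have hK : (0:ℝ) < (Real.sqrt (2 * Real.pi) * σ)⁻¹ := by positivity
  -- summable majorant
  have hu : Summable (fun l : ℤ => 2 * (|s| + 2) ^ 2 * ((Real.sqrt (2 * Real.pi) * σ)⁻¹ *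
      Real.exp ((2 * σ ^ 2 * σ ^ 2 + (|s| + 2) ^ 2) / (2 * σ ^ 2)) * Real.exp (-|(l : ℝ)|))) :=
    (summable_exp_neg_abs_int.mul_left _).mul_left _
  -- summability of the series at the point s
  have hg0 : Summable (fun l : ℤ =>
      ∫ n in ((l : ℝ) - s - 1 / 2)..((l : ℝ) - s + 1 / 2), (n - (l : ℝ)) ^ 2 * gpdf σ n) := by
    refine Summable.of_norm_bounded hu fun l => ?_
    have hab : ((l : ℝ) - s - 1 / 2) ≤ ((l : ℝ) - s + 1 / 2) := by linarith
    have hbd : ∀ n ∈ Set.uIoc ((l : ℝ) - s - 1 / 2) ((l : ℝ) - s + 1 / 2),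
        ‖(n - (l : ℝ)) ^ 2 * gpdf σ n‖ ≤ (|s| + 2) ^ 2 * ((Real.sqrt (2 * Real.pi) * σ)⁻¹ *
          Real.exp ((2 * σ ^ 2 * σ ^ 2 + (|s| + 2) ^ 2) / (2 * σ ^ 2)) *
          Real.exp (-|(l : ℝ)|)) := by
      intro n hn
      rw [Set.uIoc_of_le hab] at hn
      obtain ⟨hn1, hn2⟩ := hn
      have habs := abs_nonneg s
      have hls := le_abs_self s
      have hns := neg_abs_le s
      have hnl : |n - (l : ℝ)| ≤ |s| + 2 := abs_le.mpr ⟨by linarith, by linarith⟩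
      have hg : gpdf σ n ≤ (Real.sqrt (2 * Real.pi) * σ)⁻¹ *
          Real.exp ((2 * σ ^ 2 * σ ^ 2 + (|s| + 2) ^ 2) / (2 * σ ^ 2)) *
          Real.exp (-|(l : ℝ)|) := by
        have he : n = (l : ℝ) - ((l : ℝ) - n) := by ring
        rw [he]
        refine gpdf_le hσ l ?_
        rw [abs_sub_comm]
        exact hnl
      rw [norm_mul, norm_pow, Real.norm_eq_abs, Real.norm_eq_abs,
        abs_of_nonneg (gpdf_pos hσ n).le]
      refine mul_le_mul ?_ hg (gpdf_pos hσ n).le (by positivity)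
      exact pow_le_pow_left₀ (abs_nonneg _) hnl 2
    have := intervalIntegral.norm_integral_le_of_norm_le_const hbd
    have hlen : |((l : ℝ) - s + 1 / 2) - ((l : ℝ) - s - 1 / 2)| = 1 := by
      rw [show ((l : ℝ) - s + 1 / 2) - ((l : ℝ) - s - 1 / 2) = 1 by ring, abs_one]
    rw [hlen, mul_one] at this
    refine this.trans ?_
    have hC : (0:ℝ) ≤ (|s| + 2) ^ 2 * ((Real.sqrt (2 * Real.pi) * σ)⁻¹ *
        Real.exp ((2 * σ ^ 2 * σ ^ 2 + (|s| + 2) ^ 2) / (2 * σ ^ 2)) *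
        Real.exp (-|(l : ℝ)|)) := by positivity
    nlinarith [hC]
  have hs_mem : s ∈ Set.Ioo (-(|s| + 1)) (|s| + 1) :=
    ⟨by linarith [neg_abs_le s], by linarith [le_abs_self s]⟩
  have HD0 : HasDerivAt
      (fun t : ℝ =>
        ∑' l : ℤ, ∫ n in ((l : ℝ) - t - 1 / 2)..((l : ℝ) - t + 1 / 2),
          (n - (l : ℝ)) ^ 2 * gpdf σ n)
      (∑' l : ℤ, Dterm σ l s) s :=
    hasDerivAt_tsum_of_isPreconnected hu isOpen_Ioo isPreconnected_Ioo
      (fun l y _ => term_hasDerivAt σ l y)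
      (fun l y hy => Dterm_bound hσ l (abs_le.mpr ⟨hy.1.le, hy.2.le⟩))
      hs_mem hg0 hs_mem
  -- summability of the gaussian sums
  have hQ : Summable (fun l : ℤ => gpdf σ ((l : ℝ) - s + 1 / 2)) := by
    refine Summable.of_nonneg_of_le (fun l => (gpdf_pos hσ _).le) (fun l => ?_)
      (summable_exp_neg_abs_int.mul_left ((Real.sqrt (2 * Real.pi) * σ)⁻¹ *
        Real.exp ((2 * σ ^ 2 * σ ^ 2 + (|s| + 2) ^ 2) / (2 * σ ^ 2))))
    have he : (l : ℝ) - s + 1 / 2 = (l : ℝ) - (s - 1 / 2) := by ring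
    rw [he]
    refine gpdf_le hσ l (abs_le.mpr ⟨?_, ?_⟩) <;>
      [linarith [neg_abs_le s]; linarith [le_abs_self s]]
  have hQ' : Summable (fun l : ℤ => gpdf σ ((l : ℝ) - s - 1 / 2)) := by
    refine Summable.of_nonneg_of_le (fun l => (gpdf_pos hσ _).le) (fun l => ?_)
      (summable_exp_neg_abs_int.mul_left ((Real.sqrt (2 * Real.pi) * σ)⁻¹ *
        Real.exp ((2 * σ ^ 2 * σ ^ 2 + (|s| + 2) ^ 2) / (2 * σ ^ 2))))
    have he : (l : ℝ) - s - 1 / 2 = (l : ℝ) - (s + 1 / 2) := by ring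
    rw [he]
    refine gpdf_le hσ l (abs_le.mpr ⟨?_, ?_⟩) <;>
      [linarith [neg_abs_le s]; linarith [le_abs_self s]]
  have hval : (∑' l : ℤ, Dterm σ l s) = 2 * s * ∑' l : ℤ, gpdf σ ((l : ℝ) - s + 1 / 2) := by
    unfold Dterm
    rw [Summable.tsum_sub (hQ'.mul_left _) (hQ.mul_left _), tsum_mul_left, tsum_mul_left]
    have hshift : (∑' l : ℤ, gpdf σ ((l : ℝ) - s - 1 / 2))
        = ∑' l : ℤ, gpdf σ ((l : ℝ) - s + 1 / 2) := by
      rw [← (Equiv.addRight (1 : ℤ)).tsum_eq (fun l : ℤ => gpdf σ ((l : ℝ) - s - 1 / 2))]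
      refine tsum_congr fun l => ?_
      congr 1
      simp only [Equiv.coe_addRight]
      push_cast
      ring
    rw [hshift]
    ring
  have HD : HasDerivAt
      (fun t : ℝ =>
        ∑' l : ℤ, ∫ n in ((l : ℝ) - t - 1 / 2)..((l : ℝ) - t + 1 / 2),
          (n - (l : ℝ)) ^ 2 * gpdf σ n)
      (2 * s * ∑' l : ℤ, gpdf σ ((l : ℝ) - s + 1 / 2)) s := hval ▸ HD0
  refine ⟨HD, ?_⟩
  rw [HD.deriv]
  have hP : 0 < ∑' l : ℤ, gpdf σ ((l : ℝ) - s + 1 / 2) :=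
    Summable.tsum_pos hQ (fun l => (gpdf_pos hσ _).le) 0 (gpdf_pos hσ _)
  rcases lt_trichotomy s 0 with hs | hs | hs
  · rw [Real.sign_of_neg hs, Real.sign_of_neg (by nlinarith)]
  · simp [hs, Real.sign_zero]
  · rw [Real.sign_of_pos hs, Real.sign_of_pos (by nlinarith)]
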